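/- Let R be a ring, A a commutative Noetherian subring of the center of R, J a left ideal of R, and p a minimal prime divisor of the ideal J ∩ A of A. Then (J + Rp) ∩ A = p. -/

import Mathlib

/-- For a minimal prime `p` over `I` in a Noetherian commutative ring, there are
`n` and `s ∉ p` with `s * p^(n+1) ⊆ I`. -/
lemma aux_min_prime_pow {A : Type*} [CommRing A] [IsNoetherianRing A] {I p : Ideal A}
    (hp : p ∈ I.minimalPrimes) :
    ∃ (n : ℕ) (s : A), s ∉ p ∧ ∀ x ∈ p ^ (n + 1), s * x ∈ I := by
  haveI hPrime : p.IsPrime := hp.1.1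
  set S := Localization.AtPrime p
  set f := algebraMap A S
  -- the localized p is contained in the radical of the localized I
  have hrad : p.map f ≤ (I.map f).radical := by
    rw [Ideal.radical_eq_sInf]
    refine le_sInf fun Q hQ => ?_
    haveI : Q.IsPrime := hQ.2
    have hIQ : I ≤ Q.comap f := Ideal.le_comap_map.trans (Ideal.comap_mono hQ.1)
    have hQp : Q.comap f ≤ p := by
      intro x hx
      by_contra hxp
      exact hQ.2.ne_top (Q.eq_top_of_isUnit_mem hx
        (IsLocalization.map_units S (⟨x, hxp⟩ : p.primeCompl)))
    have hple : p ≤ Q.comap f := hp.2 ⟨Ideal.comap_isPrime f Q, hIQ⟩ hQp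
    exact (Ideal.map_mono hple).trans (Ideal.map_comap_le)
  obtain ⟨n, hn⟩ := Ideal.exists_pow_le_of_le_radical_of_fg hrad
    (Ideal.FG.map (IsNoetherian.noetherian p) f)
  rw [← Ideal.map_pow] at hn
  -- replace n by n+1 (so that p^(n+1) ≤ p^n still maps into I.map f)
  have hn' : (p ^ (n + 1)).map f ≤ I.map f :=
    (Ideal.map_mono (Ideal.pow_le_pow_right (Nat.le_succ n))).trans hn
  -- choose generators of p^(n+1)
  obtain ⟨T, hT⟩ := (IsNoetherian.noetherian (p ^ (n + 1)) : (p ^ (n+1)).FG)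
  -- for each generator q, find t ∉ p with t * q ∈ I
  have key : ∀ q ∈ T, ∃ t : A, t ∉ p ∧ t * q ∈ I := by
    intro q hq
    have hqmem : q ∈ p ^ (n + 1) := by rw [← hT]; exact Ideal.subset_span hq
    have : f q ∈ I.map f := hn' (Ideal.mem_map_of_mem f hqmem)
    obtain ⟨⟨b, s⟩, h⟩ := (IsLocalization.mem_map_algebraMap_iff p.primeCompl S).1 this
    have h' : f (s * q) = f b := by rw [map_mul, mul_comm]; exact h
    obtain ⟨c, hc⟩ := (IsLocalization.eq_iff_exists p.primeCompl S).1 h'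
    refine ⟨c * s, (c * s).2, ?_⟩
    have heq : (↑(c * s) : A) * q = ↑c * ↑b := by
      rw [Submonoid.coe_mul, mul_assoc]; exact hc
    exact heq ▸ I.mul_mem_left _ b.2
  choose t ht1 ht2 using key
  classical
  refine ⟨n, ∏ q ∈ T.attach, t q q.2, ?_, ?_⟩
  · exact Submonoid.prod_mem p.primeCompl fun q _ => ht1 q.1 q.2
  · intro x hx
    rw [← hT] at hx
    induction hx using Submodule.span_induction with
    | mem y hy =>
      have hyT : y ∈ T := hy
      rw [Finset.prod_eq_mul_prod_sdiff_singleton_of_mem (Finset.mem_attach T ⟨y, hyT⟩),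
        mul_right_comm]
      exact I.mul_mem_right _ (ht2 y hyT)
    | zero => simpa using I.zero_mem
    | add a b _ _ ha hb => rw [mul_add]; exact I.add_mem ha hb
    | smul r a _ ha =>
      rw [smul_eq_mul, mul_left_comm]
      exact I.mul_mem_left r ha

/-- Multiplying an element of `Q.map (algebraMap A R)` by a central `algebraMap A R q`
lands in `P.map (algebraMap A R)` provided `q * Q ⊆ P`. -/
lemma aux_central_mul {A R : Type*} [CommRing A] [Ring R] [Algebra A R]
    (q : A) {Q P : Ideal A} (h : ∀ q' ∈ Q, q * q' ∈ P) :
    ∀ z ∈ Q.map (algebraMap A R), algebraMap A R q * z ∈ P.map (algebraMap A R) := by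
  intro z hz
  rw [Ideal.map, Ideal.span] at hz
  induction hz using Submodule.span_induction with
  | mem y hy =>
    obtain ⟨q', hq', rfl⟩ := hy
    rw [← map_mul]
    exact Ideal.mem_map_of_mem _ (h q' hq')
  | zero => simpa using Ideal.zero_mem _
  | add a b _ _ ha hb => rw [mul_add]; exact Ideal.add_mem _ ha hb
  | smul r a _ ha =>
    rw [smul_eq_mul, ← mul_assoc, Algebra.commutes q r, mul_assoc]
    exact Ideal.mul_mem_left _ r ha

theorem stmt_9 {A R : Type*} [CommRing A] [IsNoetherianRing A] [Ring R] [Algebra A R]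
    (hinj : Function.Injective (algebraMap A R))
    (J : Ideal R) (p : Ideal A)
    (hp : p ∈ (J.comap (algebraMap A R)).minimalPrimes) :
    (J ⊔ p.map (algebraMap A R)).comap (algebraMap A R) = p := by
  set f := algebraMap A R with hf
  haveI hPrime : p.IsPrime := hp.1.1
  refine le_antisymm ?_ ?_
  swap
  · intro x hx
    exact Ideal.mem_comap.2 (le_sup_right (α := Ideal R) (Ideal.mem_map_of_mem f hx))
  intro a ha
  rw [Ideal.mem_comap] at ha
  -- key multiplication step
  have step : ∀ n : ℕ, ∀ x ∈ J ⊔ (p ^ (n+1)).map f, f a * x ∈ J ⊔ (p ^ (n+2)).map f := by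
    intro n x hx
    obtain ⟨xj, hxj, xz, hxz, rfl⟩ := Submodule.mem_sup.1 hx
    rw [mul_add]
    refine Submodule.add_mem _ (le_sup_left (α := Ideal R) (J.mul_mem_left _ hxj)) ?_
    -- f a * xz with xz ∈ map (p^(n+1))
    clear hx
    rw [Ideal.map, Ideal.span] at hxz
    induction hxz using Submodule.span_induction with
    | mem y hy =>
      obtain ⟨q, hq, rfl⟩ := hy
      -- f a * f q = f q * f a, and f a ∈ J ⊔ map p
      have hcomm : f a * f q = f q * f a := by rw [← map_mul, ← map_mul, mul_comm]
      rw [hcomm]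
      obtain ⟨bj, hbj, bz, hbz, hb⟩ := Submodule.mem_sup.1 ha
      rw [← hb, mul_add]
      refine Submodule.add_mem _ (le_sup_left (α := Ideal R) (J.mul_mem_left _ hbj)) ?_
      refine le_sup_right (α := Ideal R) (aux_central_mul q (fun q' hq' => ?_) bz hbz)
      rw [pow_succ]
      exact Ideal.mul_mem_mul hq hq'
    | zero => simpa using Submodule.zero_mem _
    | add u v _ _ hu hv => rw [mul_add]; exact Submodule.add_mem _ hu hv
    | smul r u _ hu =>
      rw [smul_eq_mul, ← mul_assoc, Algebra.commutes a r, mul_assoc]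
      exact Submodule.smul_mem _ r hu
  -- powers: f a ^ (n+1) ∈ J ⊔ map (p^(n+1))
  have pows : ∀ n : ℕ, f a ^ (n+1) ∈ J ⊔ (p ^ (n+1)).map f := by
    intro n
    induction n with
    | zero => simpa using ha
    | succ m ih =>
      have := step m _ ih
      rw [← pow_succ'] at this
      exact this
  obtain ⟨n, s, hs, hsp⟩ := aux_min_prime_pow hp
  -- f s * f a ^ (n+1) ∈ J
  have hJ : f (s * a ^ (n+1)) ∈ J := by
    obtain ⟨xj, hxj, xz, hxz, hx⟩ := Submodule.mem_sup.1 (pows n)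
    have : f s * (f a) ^ (n+1) ∈ J := by
      rw [← hx, mul_add]
      refine J.add_mem (J.mul_mem_left _ hxj) ?_
      have := aux_central_mul s (Q := p ^ (n+1)) (P := J.comap f) hsp xz hxz
      exact Ideal.map_comap_le this
    simpa [map_mul, map_pow] using this
  have hmem : s * a ^ (n+1) ∈ p := hp.1.2 hJ
  rcases hPrime.mem_or_mem hmem with h | h
  · exact absurd h hs
  · exact hPrime.mem_of_pow_mem _ h
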